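/- Let Y and Z be subspaces of a metric space (X,d) that are tangent equivalent at a ∈ Y ∩ Z w.r.t. a normalizing sequence r̃, and let Z̃_{a,r̃} be a maximal self-stable family in Z̃. Then the family [Z̃_{a,r̃}]_Y := {ỹ ∈ Ỹ : ∃ z̃ ∈ Z̃_{a,r̃}, d̃_{r̃}(ỹ,z̃) = 0} is maximal self-stable in Ỹ, and [[Z̃_{a,r̃}]_Y]_Z = Z̃_{a,r̃} = [Z̃_{a,r̃}]_Z. -/

import Mathlib

open Filter Topology

/-- A normalizing sequence: positive reals tending to 0. -/
def Normalizing (r : ℕ → ℝ) : Prop :=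
  (∀ n, 0 < r n) ∧ Tendsto r atTop (nhds 0)

/-- Two sequences in `X` are mutually stable w.r.t. `r`:
the limit of `dist (x n) (y n) / r n` exists and is finite. -/
def MutuallyStable {X : Type*} [MetricSpace X] (r : ℕ → ℝ) (x y : ℕ → X) : Prop :=
  ∃ L : ℝ, Tendsto (fun n => dist (x n) (y n) / r n) atTop (nhds L)

/-- The normalized limit distance `d̃`. -/
noncomputable def dtilde {X : Type*} [MetricSpace X] (r : ℕ → ℝ) (x y : ℕ → X) : ℝ :=
  limUnder atTop (fun n => dist (x n) (y n) / r n)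

/-- A family is self-stable if every two members are mutually stable. -/
def SelfStable {X : Type*} [MetricSpace X] (r : ℕ → ℝ) (F : Set (ℕ → X)) : Prop :=
  ∀ x ∈ F, ∀ y ∈ F, MutuallyStable r x y

/-- A family is maximal self-stable if it is self-stable and maximal with that property. -/
def MaximalSelfStable {X : Type*} [MetricSpace X] (r : ℕ → ℝ) (F : Set (ℕ → X)) : Prop :=
  SelfStable r F ∧ ∀ G, SelfStable r G → F ⊆ G → G = F

/-- A sequence lies in the subspace `Y`. -/
def InSubspace {X : Type*} (Y : Set X) (x : ℕ → X) : Prop := ∀ n, x n ∈ Y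

/-- A family of sequences in the subspace `Y` that is self-stable and maximal among
self-stable families of sequences in `Y`. -/
def MaximalSelfStableIn {X : Type*} [MetricSpace X] (Y : Set X) (r : ℕ → ℝ)
    (F : Set (ℕ → X)) : Prop :=
  (∀ x ∈ F, InSubspace Y x) ∧ SelfStable r F ∧
    ∀ G, (∀ x ∈ G, InSubspace Y x) → SelfStable r G → F ⊆ G → G = F

/-- `[F]_Y`: all sequences in `Y` at normalized distance 0 from some member of `F`. -/
def bracket {X : Type*} [MetricSpace X] (Y : Set X) (r : ℕ → ℝ) (F : Set (ℕ → X)) :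
    Set (ℕ → X) :=
  {y | InSubspace Y y ∧ ∃ x ∈ F, Tendsto (fun n => dist (x n) (y n) / r n) atTop (nhds 0)}

/-- `Y` and `Z` are tangent equivalent at `a` w.r.t. `r`. -/
def TangentEquiv {X : Type*} [MetricSpace X] (Y Z : Set X) (a : X) (r : ℕ → ℝ) : Prop :=
  (∀ y : ℕ → X, InSubspace Y y → MutuallyStable r y (fun _ => a) →
    ∃ z : ℕ → X, InSubspace Z z ∧
      Tendsto (fun n => dist (y n) (z n) / r n) atTop (nhds 0)) ∧
  (∀ z : ℕ → X, InSubspace Z z → MutuallyStable r z (fun _ => a) →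
    ∃ y : ℕ → X, InSubspace Y y ∧
      Tendsto (fun n => dist (z n) (y n) / r n) atTop (nhds 0))

/-- `Y` and `Z` are strongly tangent equivalent at `a`. -/
def StronglyTangentEquiv {X : Type*} [MetricSpace X] (Y Z : Set X) (a : X) : Prop :=
  ∀ r : ℕ → ℝ, Normalizing r → TangentEquiv Y Z a r

/-- `ε_a(t, Z, Y) = sup_{z ∈ S^Z(a,t)} inf_{y ∈ Y} dist z y`
(here the first set argument is `Y`, the second is `Z`). -/
noncomputable def epsZY {X : Type*} [MetricSpace X] (Y Z : Set X) (a : X) (t : ℝ) : ℝ :=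
  sSup ((fun z => sInf ((fun y => dist z y) '' Y)) '' {z ∈ Z | dist a z = t})

lemma mutuallyStable_symm {X : Type*} [MetricSpace X] {r : ℕ → ℝ} {x y : ℕ → X}
    (h : MutuallyStable r x y) : MutuallyStable r y x := by
  obtain ⟨L, hL⟩ := h
  exact ⟨L, by simpa [dist_comm] using hL⟩

/-- transfer mutual stability along a zero-distance perturbation -/
lemma transfer_stable {X : Type*} [MetricSpace X] {r : ℕ → ℝ} (hr : ∀ n, 0 < r n)
    {x y w : ℕ → X}
    (h0 : Tendsto (fun n => dist (x n) (y n) / r n) atTop (nhds 0))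
    (h : MutuallyStable r x w) : MutuallyStable r y w := by
  obtain ⟨L, hL⟩ := h
  have hdiff : Tendsto (fun n => (dist (y n) (w n) - dist (x n) (w n)) / r n) atTop (nhds 0) := by
    apply squeeze_zero_norm _ h0
    intro n
    rw [Real.norm_eq_abs, abs_div, abs_of_pos (hr n)]
    apply (div_le_div_iff_of_pos_right (hr n)).mpr
    calc |dist (y n) (w n) - dist (x n) (w n)| ≤ dist (y n) (x n) := abs_dist_sub_le _ _ _
      _ = dist (x n) (y n) := dist_comm _ _
  refine ⟨L, ?_⟩
  have := hL.add hdiff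
  rw [add_zero] at this
  convert this using 2 with n
  rw [← add_div]
  ring_nf

lemma zero_trans {X : Type*} [MetricSpace X] {r : ℕ → ℝ} (hr : ∀ n, 0 < r n)
    {x y z : ℕ → X}
    (h1 : Tendsto (fun n => dist (x n) (y n) / r n) atTop (nhds 0))
    (h2 : Tendsto (fun n => dist (y n) (z n) / r n) atTop (nhds 0)) :
    Tendsto (fun n => dist (x n) (z n) / r n) atTop (nhds 0) := by
  have hsum := h1.add h2
  rw [add_zero] at hsum
  apply squeeze_zero (fun n => div_nonneg dist_nonneg (hr n).le) _ hsum
  intro n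
  rw [← add_div]
  exact (div_le_div_iff_of_pos_right (hr n)).mpr (dist_triangle _ _ _)

/-- If `Y` and `Z` are tangent equivalent at `a` w.r.t. `r`, then for any maximal self-stable
family in `Z̃` containing `ã`, the family `[Z̃_{a,r̃}]_Y` is maximal self-stable in `Ỹ`, and
`[[Z̃_{a,r̃}]_Y]_Z = Z̃_{a,r̃} = [Z̃_{a,r̃}]_Z`. -/
theorem stmt_14 {X : Type*} [MetricSpace X] (Y Z : Set X) (a : X)
    (haY : a ∈ Y) (haZ : a ∈ Z) (r : ℕ → ℝ) (hr : Normalizing r)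
    (hYZ : TangentEquiv Y Z a r)
    (F : Set (ℕ → X)) (hF : MaximalSelfStableIn Z r F) (haF : (fun _ => a) ∈ F) :
    MaximalSelfStableIn Y r (bracket Y r F) ∧
      bracket Z r (bracket Y r F) = F ∧ bracket Z r F = F := by
  obtain ⟨hrpos, -⟩ := hr
  obtain ⟨hFZ, hFss, hFmax⟩ := hF
  -- members of bracket Y r F are stable with everything in F
  have key : ∀ y ∈ bracket Y r F, ∀ f ∈ F, MutuallyStable r y f := by
    rintro y ⟨hyY, f', hf'F, hf'y⟩ f hfF
    exact transfer_stable hrpos hf'y (hFss f' hf'F f hfF)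
  -- constant a belongs to bracket Y r F
  have haBr : (fun _ => a) ∈ bracket Y r F := by
    refine ⟨fun _ => haY, (fun _ => a), haF, ?_⟩
    simpa using tendsto_const_nhds (x := (0 : ℝ))
  -- self-stability of bracket Y r F
  have hBss : SelfStable r (bracket Y r F) := by
    rintro y1 hy1 y2 ⟨hy2Y, f2, hf2F, hf2y2⟩
    exact mutuallyStable_symm (transfer_stable hrpos hf2y2
      (mutuallyStable_symm (key y1 hy1 f2 hf2F)))
  -- bracket Z r F = F
  have hZF : bracket Z r F = F := by
    apply hFmax
    · rintro w ⟨hwZ, -⟩; exact hwZ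
    · rintro w1 ⟨hw1Z, f1, hf1F, hf1w1⟩ w2 ⟨hw2Z, f2, hf2F, hf2w2⟩
      exact mutuallyStable_symm (transfer_stable hrpos hf2w2 (mutuallyStable_symm
        (transfer_stable hrpos hf1w1 (hFss f1 hf1F f2 hf2F))))
    · intro f hfF
      refine ⟨hFZ f hfF, f, hfF, ?_⟩
      simpa using tendsto_const_nhds (x := (0 : ℝ))
  -- any sequence in Y stable with everything in bracket Y r F belongs to bracket Y r F
  have habsorb : ∀ g : ℕ → X, InSubspace Y g →
      (∀ y ∈ bracket Y r F, MutuallyStable r g y) → g ∈ bracket Y r F := by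
    intro g hgY hg
    obtain ⟨z, hzZ, hgz⟩ := hYZ.1 g hgY (hg _ haBr)
    -- z is stable with every f ∈ F
    have hzF : ∀ f ∈ F, MutuallyStable r z f := by
      intro f hfF
      obtain ⟨yf, hyfY, hfyf⟩ := hYZ.2 f (hFZ f hfF) (hFss f hfF _ haF)
      have hyfB : yf ∈ bracket Y r F := ⟨hyfY, f, hfF, hfyf⟩
      have hyff : Tendsto (fun n => dist (yf n) (f n) / r n) atTop (nhds 0) := by
        simpa [dist_comm] using hfyf
      have : MutuallyStable r g f :=
        mutuallyStable_symm (transfer_stable hrpos hyff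
          (mutuallyStable_symm (hg yf hyfB)))
      exact transfer_stable hrpos hgz this
    have hzF' : z ∈ F := by
      have := hFmax (insert z F) ?_ ?_ (Set.subset_insert _ _)
      · rw [← this]; exact Set.mem_insert _ _
      · rintro x (rfl | hx)
        exacts [hzZ, hFZ x hx]
      · rintro x (rfl | hx) w (rfl | hw)
        · exact ⟨0, by simpa using tendsto_const_nhds (x := (0 : ℝ))⟩
        · exact hzF w hw
        · exact mutuallyStable_symm (hzF x hx)
        · exact hFss x hx w hw
    exact ⟨hgY, z, hzF', by simpa [dist_comm] using hgz⟩
  refine ⟨⟨fun y hy => hy.1, hBss, ?_⟩, ?_, hZF⟩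
  · intro G hGY hGss hsub
    apply Set.Subset.antisymm _ hsub
    intro g hgG
    exact habsorb g (hGY g hgG) fun y hy => hGss g hgG y (hsub hy)
  · -- bracket Z r (bracket Y r F) = F
    apply Set.Subset.antisymm
    · rintro w ⟨hwZ, y, ⟨hyY, f, hfF, hfy⟩, hyw⟩
      rw [← hZF]
      exact ⟨hwZ, f, hfF, zero_trans hrpos hfy hyw⟩
    · intro f hfF
      obtain ⟨yf, hyfY, hfyf⟩ := hYZ.2 f (hFZ f hfF) (hFss f hfF _ haF)
      exact ⟨hFZ f hfF, yf, ⟨hyfY, f, hfF, hfyf⟩, by simpa [dist_comm] using hfyf⟩
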